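/- Let K ≥ 2 and let O_1, …, O_K be subsets of ℝ³ = EuclideanSpace ℝ (Fin 3), each of which is nonempty, not equal to all of ℝ³, and regular closed (O_k = closure (interior O_k)). Let s_k denote the signed distance function of O_k and for p ∈ ℝ³ write u(p) = (s_1(p), …, s_K(p)) : Fin K → ℝ. Then the following are equivalent: (i) for every p ∈ ℝ³, min⁽²⁾(u(p)) ≥ 0; (ii) for every p ∈ ℝ³, min⁽¹⁾(u(p)) + min⁽²⁾(u(p)) ≥ 0. -/

import Mathlib

open Classical in
/-- Signed distance function of a set `O ⊆ ℝ³`: negative inside `O`, positive outside. -/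
noncomputable def sdf (O : Set (EuclideanSpace ℝ (Fin 3))) (p : EuclideanSpace ℝ (Fin 3)) : ℝ :=
  if p ∈ O then -(Metric.infDist p (frontier O)) else Metric.infDist p (frontier O)

/-- Smallest entry of a vector `d : Fin K → ℝ` (for `K ≥ 1`). -/
noncomputable def min1 {K : ℕ} (d : Fin K → ℝ) : ℝ := ⨅ i, d i

/-- Second smallest entry of a vector `d : Fin K → ℝ` (for `K ≥ 2`), expressed as the
minimum over pairs of distinct indices of the max of the two corresponding entries. -/
noncomputable def min2 {K : ℕ} (d : Fin K → ℝ) : ℝ :=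
  ⨅ p : {q : Fin K × Fin K // q.1 ≠ q.2}, max (d p.val.1) (d p.val.2)

/-- `sdf` is negative on the interior (when the frontier is nonempty and the set closed). -/
lemma sdf_neg_of_mem_interior {O : Set (EuclideanSpace ℝ (Fin 3))}
    (hf : (frontier O).Nonempty) {x : EuclideanSpace ℝ (Fin 3)} (hx : x ∈ interior O) :
    sdf O x < 0 := by
  have hxO : x ∈ O := interior_subset hx
  have hxf : x ∉ frontier O := fun h => h.2 hx
  have hpos : 0 < Metric.infDist x (frontier O) :=
    (isClosed_frontier.notMem_iff_infDist_pos hf).mp hxf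
  simp [sdf, hxO]; linarith

set_option maxHeartbeats 1000000 in
theorem constraint_equivalence {K : ℕ} (hK : 2 ≤ K)
    (O : Fin K → Set (EuclideanSpace ℝ (Fin 3)))
    (hne : ∀ k, (O k).Nonempty) (hnu : ∀ k, O k ≠ Set.univ)
    (hreg : ∀ k, O k = closure (interior (O k))) :
    (∀ p : EuclideanSpace ℝ (Fin 3), min2 (fun i => sdf (O i) p) ≥ 0) ↔
    (∀ p : EuclideanSpace ℝ (Fin 3),
      min1 (fun i => sdf (O i) p) + min2 (fun i => sdf (O i) p) ≥ 0) := by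
  haveI : NeZero K := ⟨by omega⟩
  -- nonempty index types
  have h01 : (⟨0, by omega⟩ : Fin K) ≠ ⟨1, by omega⟩ := by
    intro h; simpa using congrArg Fin.val h
  haveI hP : Nonempty {q : Fin K × Fin K // q.1 ≠ q.2} := ⟨⟨(_, _), h01⟩⟩
  have hclosed : ∀ k, IsClosed (O k) := fun k => (hreg k) ▸ isClosed_closure
  have hfront : ∀ k, (frontier (O k)).Nonempty := by
    intro k
    by_contra h
    rw [Set.not_nonempty_iff_eq_empty] at h
    rcases isClopen_iff.mp (isClopen_iff_frontier_eq_empty.mpr h) with h' | h'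
    · exact (hne k).ne_empty h'
    · exact hnu k h'
  constructor
  · -- hard direction
    intro H p
    set f : Fin K → ℝ := fun i => sdf (O i) p with hf
    have hbdd1 : BddBelow (Set.range f) := Finite.bddBelow_range f
    have hbdd2 : BddBelow (Set.range fun q : {q : Fin K × Fin K // q.1 ≠ q.2} =>
        max (f q.val.1) (f q.val.2)) := Finite.bddBelow_range _
    -- interiors pairwise disjoint
    have hdis : ∀ i j, i ≠ j → ∀ x, x ∈ interior (O i) → x ∈ interior (O j) → False := by
      intro i j hij x hxi hxj
      have hle : min2 (fun k => sdf (O k) x) ≤ max (sdf (O i) x) (sdf (O j) x) := by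
        rw [min2]
        exact ciInf_le (Finite.bddBelow_range _) (⟨(i, j), hij⟩ : {q : Fin K × Fin K // q.1 ≠ q.2})
      have hi := sdf_neg_of_mem_interior (hfront i) hxi
      have hj := sdf_neg_of_mem_interior (hfront j) hxj
      linarith [H x, max_lt hi hj]
    obtain ⟨i₀, hi₀⟩ := Finite.exists_min f
    have hmin1 : min1 f = f i₀ := by
      rw [min1]; exact le_antisymm (ciInf_le hbdd1 i₀) (le_ciInf hi₀)
    by_cases hpos : 0 ≤ f i₀
    · have h1 : 0 ≤ min1 f := hmin1 ▸ hpos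
      linarith [H p]
    push_neg at hpos
    -- p ∈ O i₀ with positive distance r to its frontier
    have hpmem : p ∈ O i₀ := by
      by_contra h
      simp only [hf, sdf, if_neg h] at hpos
      exact absurd hpos (not_lt.mpr Metric.infDist_nonneg)
    set r : ℝ := Metric.infDist p (frontier (O i₀)) with hr
    have hfi₀ : f i₀ = -r := by simp [hf, sdf, hpmem, hr]
    have hrpos : 0 < r := by rw [hfi₀] at hpos; linarith
    -- ball p r ⊆ interior (O i₀)
    have hball : Metric.ball p r ⊆ interior (O i₀) := by
      have hsub : Metric.ball p r ⊆ interior (O i₀) ∪ (closure (O i₀))ᶜ := by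
        intro q hq
        have hqf : q ∉ frontier (O i₀) := by
          intro hqf
          have h1 : r ≤ dist p q := Metric.infDist_le_dist_of_mem hqf
          rw [Metric.mem_ball, dist_comm] at hq
          linarith
        rw [frontier, Set.mem_diff] at hqf
        push_neg at hqf
        by_cases hqc : q ∈ closure (O i₀)
        · exact Or.inl (hqf hqc)
        · exact Or.inr hqc
      refine IsPreconnected.subset_left_of_subset_union isOpen_interior
        isClosed_closure.isOpen_compl ?_ hsub ⟨p, ?_⟩ (convex_ball p r).isPreconnected
      · exact Set.disjoint_left.mpr fun x hx hx' => hx' (subset_closure (interior_subset hx))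
      · refine ⟨Metric.mem_ball_self hrpos, ?_⟩
        rcases hsub (Metric.mem_ball_self hrpos) with h | h
        · exact h
        · exact absurd (subset_closure hpmem) h
    -- frontier of any O j is disjoint from interior (O i₀)
    have hfd : ∀ j, j ≠ i₀ → ∀ q, q ∈ frontier (O j) → q ∉ interior (O i₀) := by
      intro j hj q hq hq'
      have hqO : q ∈ O j := (hclosed j).frontier_subset hq
      have hqc : q ∈ closure (interior (O j)) := (hreg j) ▸ hqO
      obtain ⟨x, hxi, hxj⟩ := mem_closure_iff_nhds.mp hqc _ (isOpen_interior.mem_nhds hq')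
      exact hdis i₀ j (Ne.symm hj) x hxi hxj
    -- for j ≠ i₀ : f j ≥ r
    have hge : ∀ j, j ≠ i₀ → r ≤ f j := by
      intro j hj
      have hinf : r ≤ Metric.infDist p (frontier (O j)) := by
        by_contra h
        push_neg at h
        obtain ⟨q, hq, hdq⟩ := (Metric.infDist_lt_iff (hfront j)).mp h
        exact hfd j hj q hq (hball (Metric.mem_ball'.mpr hdq))
      have hpj : p ∉ O j := by
        intro hpj
        have hpc : p ∈ closure (interior (O j)) := (hreg j) ▸ hpj
        have hpi : p ∈ interior (O i₀) := hball (Metric.mem_ball_self hrpos)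
        obtain ⟨x, hxi, hxj⟩ := mem_closure_iff_nhds.mp hpc _ (isOpen_interior.mem_nhds hpi)
        exact hdis i₀ j (Ne.symm hj) x hxi hxj
      simpa [hf, sdf, hpj] using hinf
    -- min2 ≥ r
    have hmin2 : r ≤ min2 f := by
      rw [min2]
      refine le_ciInf fun q => ?_
      rcases q with ⟨⟨a, b⟩, hab⟩
      by_cases ha : a = i₀
      · have hb : b ≠ i₀ := fun h => hab (ha.trans h.symm)
        exact le_max_of_le_right (hge b hb)
      · exact le_max_of_le_left (hge a ha)
    rw [hmin1, hfi₀]; linarith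
  · -- easy direction: min1 ≤ min2
    intro H p
    have hle : min1 (fun i => sdf (O i) p) ≤ min2 (fun i => sdf (O i) p) := by
      rw [min1, min2]
      refine le_ciInf fun q => ?_
      exact le_max_of_le_left (ciInf_le (Finite.bddBelow_range _) q.val.1)
    linarith [H p]
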